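/- Let k be a positive integer and let ℓ_q(k) denote the sum of the digits of k written in base q. Then for every integer d with (q-1)·d > ℓ_q(k), the power sum S_d(k) = Σ_{a monic, deg a = d} a^k, the sum ranging over all monic polynomials a of degree d in F_q[θ], is equal to 0 in F_q[θ]. (Consequently ζ_A(x,-k) = Σ_{d≥0} S_d(k) x^{-d} is a polynomial in x^{-1}.) -/

import Mathlib

set_option linter.unusedSectionVars false
open Finset Polynomial

variable {Fq : Type} [Field Fq] [Fintype Fq]

lemma aux_div_add_div_le (a b c : ℕ) : a / c + b / c ≤ (a + b) / c := by
  rcases Nat.eq_zero_or_pos c with rfl | hc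
  · simp
  · rw [Nat.le_div_iff_mul_le hc, add_mul]
    exact Nat.add_le_add (Nat.div_mul_le_self a c) (Nat.div_mul_le_self b c)

lemma digits_sum_legendre {b : ℕ} (hb : 2 ≤ b) (n N : ℕ) (hN : n < b ^ N) :
    (b - 1) * ∑ i ∈ Finset.range N, n / b ^ (i + 1) = n - (Nat.digits b n).sum := by
  rcases Nat.eq_zero_or_pos n with rfl | hn
  · simp
  rw [← Nat.sub_one_mul_sum_log_div_pow_eq_sub_sum_digits (p := b) n]
  congr 1
  refine (Finset.sum_subset ?_ ?_).symm
  · refine Finset.range_subset_range.2 (Nat.succ_le_of_lt ?_)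
    exact Nat.log_lt_of_lt_pow hn.ne' hN
  · intro i _ hi
    rw [Finset.mem_range, not_lt, Nat.succ_le_iff] at hi
    apply Nat.div_eq_of_lt
    rw [← Nat.log_lt_iff_lt_pow (by omega) hn.ne']
    omega

lemma div_add_div_of_digits_sum {b : ℕ} (hb : 2 ≤ b) (a c : ℕ)
    (h : (Nat.digits b a).sum + (Nat.digits b c).sum ≤ (Nat.digits b (a + c)).sum)
    (m : ℕ) (hm : 1 ≤ m) : (a + c) / b ^ m = a / b ^ m + c / b ^ m := by
  set N := max m ((Nat.log b (a + c)).succ) with hNdef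
  have hac : a + c < b ^ N := lt_of_lt_of_le (Nat.lt_pow_succ_log_self (by omega) _)
    (Nat.pow_le_pow_right (by omega) (le_max_right _ _))
  have e1 := digits_sum_legendre hb (a + c) N hac
  have e2 := digits_sum_legendre hb a N (by omega)
  have e3 := digits_sum_legendre hb c N (by omega)
  have hd1 := Nat.digit_sum_le b (a + c)
  have hd2 := Nat.digit_sum_le b a
  have hd3 := Nat.digit_sum_le b c
  have hterm : ∀ i ∈ Finset.range N,
      a / b ^ (i + 1) + c / b ^ (i + 1) ≤ (a + c) / b ^ (i + 1) :=
    fun i _ => aux_div_add_div_le a c _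
  have hsle : (∑ i ∈ Finset.range N, a / b ^ (i + 1)) + ∑ i ∈ Finset.range N, c / b ^ (i + 1)
      ≤ ∑ i ∈ Finset.range N, (a + c) / b ^ (i + 1) := by
    rw [← Finset.sum_add_distrib]
    exact Finset.sum_le_sum hterm
  have hsge : (b - 1) * ∑ i ∈ Finset.range N, (a + c) / b ^ (i + 1)
      ≤ (b - 1) * ((∑ i ∈ Finset.range N, a / b ^ (i + 1)) +
        ∑ i ∈ Finset.range N, c / b ^ (i + 1)) := by
    rw [mul_add]
    omega
  have hQ : ∑ i ∈ Finset.range N, (a + c) / b ^ (i + 1)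
      = (∑ i ∈ Finset.range N, a / b ^ (i + 1)) + ∑ i ∈ Finset.range N, c / b ^ (i + 1) :=
    le_antisymm (Nat.le_of_mul_le_mul_left hsge (by omega)) hsle
  by_contra hne
  have hmem : m - 1 ∈ Finset.range N := Finset.mem_range.2 (by omega)
  have hm1 : m - 1 + 1 = m := by omega
  have hlt : a / b ^ m + c / b ^ m < (a + c) / b ^ m :=
    lt_of_le_of_ne (aux_div_add_div_le a c _) (fun he => hne he.symm)
  have : (∑ i ∈ Finset.range N, a / b ^ (i + 1)) + ∑ i ∈ Finset.range N, c / b ^ (i + 1)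
      < ∑ i ∈ Finset.range N, (a + c) / b ^ (i + 1) := by
    rw [← Finset.sum_add_distrib]
    exact Finset.sum_lt_sum hterm ⟨m - 1, hmem, by rw [hm1]; exact hlt⟩
  omega


lemma digits_sum_add_base_pow {p m₀ : ℕ} (hp : 2 ≤ p) (hm₀ : 0 < m₀) {q : ℕ} (hq : q = p ^ m₀)
    (a c : ℕ)
    (h : (Nat.digits p a).sum + (Nat.digits p c).sum ≤ (Nat.digits p (a + c)).sum) :
    (Nat.digits q a).sum + (Nat.digits q c).sum = (Nat.digits q (a + c)).sum := by
  have hq2 : 2 ≤ q := by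
    have : p ^ 1 ≤ p ^ m₀ := Nat.pow_le_pow_right (by omega) hm₀
    simp at this; omega
  set N := (Nat.log q (a + c)).succ with hNdef
  have hac : a + c < q ^ N := Nat.lt_pow_succ_log_self (by omega) _
  have e1 := digits_sum_legendre hq2 (a + c) N hac
  have e2 := digits_sum_legendre hq2 a N (by omega)
  have e3 := digits_sum_legendre hq2 c N (by omega)
  have hd1 := Nat.digit_sum_le q (a + c)
  have hd2 := Nat.digit_sum_le q a
  have hd3 := Nat.digit_sum_le q c
  have hterm : ∀ i ∈ Finset.range N,
      (a + c) / q ^ (i + 1) = a / q ^ (i + 1) + c / q ^ (i + 1) := by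
    intro i _
    have : q ^ (i + 1) = p ^ (m₀ * (i + 1)) := by rw [hq, ← pow_mul]
    rw [this]
    exact div_add_div_of_digits_sum hp a c h _ (Nat.mul_pos hm₀ (by omega))
  have hQ : ∑ i ∈ Finset.range N, (a + c) / q ^ (i + 1)
      = (∑ i ∈ Finset.range N, a / q ^ (i + 1)) + ∑ i ∈ Finset.range N, c / q ^ (i + 1) := by
    rw [← Finset.sum_add_distrib]
    exact Finset.sum_congr rfl hterm
  rw [hQ, mul_add, e2, e3] at e1
  omega


lemma digits_sum_add_of_choose {p m₀ : ℕ} (hp : p.Prime) (hm₀ : 0 < m₀) {q : ℕ}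
    (hq : q = p ^ m₀) (a c : ℕ) (h : ¬ p ∣ Nat.choose (a + c) a) :
    (Nat.digits q a).sum + (Nat.digits q c).sum = (Nat.digits q (a + c)).sum := by
  haveI : Fact p.Prime := ⟨hp⟩
  have hv : padicValNat p (Nat.choose (a + c) a) = 0 := padicValNat.eq_zero_of_not_dvd h
  have hk := sub_one_mul_padicValNat_choose_eq_sub_sum_digits' (p := p) (k := a) (n := c)
  rw [add_comm c a] at hk
  rw [hv, mul_zero] at hk
  have hle : (Nat.digits p a).sum + (Nat.digits p c).sum ≤ (Nat.digits p (a + c)).sum := by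
    omega
  exact digits_sum_add_base_pow hp.two_le hm₀ hq a c hle

lemma digits_sum_multinomial {p m₀ : ℕ} (hp : p.Prime) (hm₀ : 0 < m₀) {q : ℕ}
    (hq : q = p ^ m₀) {ι : Type*} (s : Finset ι) (e : ι → ℕ)
    (h : ¬ p ∣ Nat.multinomial s e) :
    (Nat.digits q (∑ i ∈ s, e i)).sum = ∑ i ∈ s, (Nat.digits q (e i)).sum := by
  induction s using Finset.cons_induction with
  | empty => simp
  | cons a s ha ih =>
      rw [Nat.multinomial_cons] at h
      rw [hp.dvd_mul] at h
      push_neg at h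
      rw [Finset.sum_cons, Finset.sum_cons, ← ih h.2,
        ← digits_sum_add_of_choose hp hm₀ hq _ _ h.1]

lemma digits_sum_ge_of_dvd {q : ℕ} (hq : 2 ≤ q) (e : ℕ) (he : e ≠ 0) (hd : (q - 1) ∣ e) :
    q - 1 ≤ (Nat.digits q e).sum := by
  have hsne : (Nat.digits q e).sum ≠ 0 := by
    intro h0
    have hall := List.sum_eq_zero_iff.1 h0
    have hlast := Nat.getLast_digit_ne_zero q he
    exact hlast (hall _ (List.getLast_mem _))
  have hdvd : (q - 1) ∣ (Nat.digits q e).sum := by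
    rcases Nat.eq_or_lt_of_le hq with h2 | h3
    · rw [← h2]
      norm_num
    · have hmod : q % (q - 1) = 1 := by
        rw [Nat.mod_eq_sub_mod (by omega)]
        have h1 : q - (q - 1) = 1 := by omega
        rw [h1, Nat.mod_eq_of_lt (by omega)]
      have hme := Nat.modEq_digits_sum (q - 1) q hmod e
      exact (Nat.modEq_zero_iff_dvd).1 (hme.symm.trans ((Nat.modEq_zero_iff_dvd).2 hd))
  exact Nat.le_of_dvd (Nat.pos_of_ne_zero hsne) hdvd


lemma charP_of_card {Fq : Type} [Field Fq] [Fintype Fq] {p m₀ : ℕ} (hp : p.Prime)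
    (hm₀ : 0 < m₀) (hcard : Fintype.card Fq = p ^ m₀) : CharP Fq p := by
  obtain ⟨n, hchar, hc⟩ := FiniteField.card Fq (ringChar Fq)
  rw [hcard] at hc
  have hr : ringChar Fq = p := by
    have hpd : p ∣ (ringChar Fq) ^ (n : ℕ) := by
      rw [← hc]
      exact dvd_pow_self p hm₀.ne'
    have := hp.dvd_of_dvd_pow hpd
    exact ((Nat.prime_dvd_prime_iff_eq hp hchar).1 this).symm
  rw [← hr]
  exact ringChar.charP Fq

lemma sum_pow_eq_zero' {Fq : Type} [Field Fq] [Fintype Fq] (e : ℕ)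
    (he : e = 0 ∨ ¬ (Fintype.card Fq - 1) ∣ e) : ∑ t : Fq, t ^ e = 0 := by
  classical
  rcases he with rfl | he
  · simp only [pow_zero, Finset.sum_const, Finset.card_univ, nsmul_eq_mul, mul_one]
    exact FiniteField.cast_card_eq_zero Fq
  · have he0 : e ≠ 0 := by rintro rfl; exact he (dvd_zero _)
    let φ : Fqˣ ↪ Fq := ⟨Units.val, Units.val_injective⟩
    have huniv : Finset.univ.map φ = Finset.univ \ {0} := by
      ext x
      simpa only [Finset.mem_map, Finset.mem_univ, Function.Embedding.coeFn_mk, true_and,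
        Finset.mem_sdiff, Finset.mem_singleton, φ, IsUnit] using isUnit_iff_ne_zero
    calc
      ∑ x : Fq, x ^ e = ∑ x ∈ Finset.univ \ {(0 : Fq)}, x ^ e := by
        rw [← Finset.sum_sdiff (({0} : Finset Fq).subset_univ), Finset.sum_singleton,
          zero_pow he0, add_zero]
      _ = ∑ x : Fqˣ, ((x : Fq) ^ e) := by simp [φ, ← huniv, Finset.sum_map]
      _ = 0 := by rw [FiniteField.sum_pow_units Fq e, if_neg he]


lemma key_vanish {Fq : Type} [Field Fq] [Fintype Fq] {p m₀ : ℕ} (hp : p.Prime)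
    (hm₀ : 0 < m₀) (hcardq : Fintype.card Fq = p ^ m₀) [CharP Fq p]
    (d j : ℕ) (hj : (Nat.digits (Fintype.card Fq) j).sum < (Fintype.card Fq - 1) * d) :
    ∑ c : Fin d → Fq, (∑ i : Fin d, Polynomial.C (c i) * Polynomial.X ^ (i : ℕ)) ^ j
      = 0 := by
  classical
  set q := Fintype.card Fq with hqdef
  simp_rw [Finset.sum_pow_eq_sum_piAntidiag]
  rw [Finset.sum_comm]
  apply Finset.sum_eq_zero
  intro e he
  rw [Finset.mem_piAntidiag] at he
  by_cases hm : p ∣ Nat.multinomial Finset.univ e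
  · have hmz : ((Nat.multinomial Finset.univ e : ℕ) : Polynomial Fq) = 0 := by
      rw [← map_natCast (Polynomial.C : Fq →+* Polynomial Fq)]
      rw [(CharP.cast_eq_zero_iff Fq p _).2 hm, map_zero]
    apply Finset.sum_eq_zero
    intro c _
    rw [hmz, zero_mul]
  · rw [← Finset.mul_sum]
    have hprod : ∑ c : Fin d → Fq, ∏ i : Fin d,
        (Polynomial.C (c i) * Polynomial.X ^ (i : ℕ)) ^ e i
        = ∏ i : Fin d, ∑ t : Fq, (Polynomial.C t * Polynomial.X ^ (i : ℕ)) ^ e i := by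
      rw [Finset.prod_univ_sum]
      rw [Fintype.piFinset_univ]
    rw [hprod]
    by_cases hall : ∀ i : Fin d, e i ≠ 0 ∧ (q - 1) ∣ e i
    · exfalso
      have hsum := digits_sum_multinomial hp hm₀ hcardq Finset.univ e hm
      rw [he.1] at hsum
      have hge : ∀ i : Fin d, q - 1 ≤ (Nat.digits q (e i)).sum := by
        intro i
        have hq2 : 2 ≤ q := Fintype.one_lt_card
        exact digits_sum_ge_of_dvd hq2 (e i) (hall i).1 (hall i).2
      have : (q - 1) * d ≤ ∑ i : Fin d, (Nat.digits q (e i)).sum := by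
        calc (q - 1) * d = ∑ _i : Fin d, (q - 1) := by
              rw [Finset.sum_const, Finset.card_univ, Fintype.card_fin, smul_eq_mul, mul_comm]
          _ ≤ _ := Finset.sum_le_sum fun i _ => hge i
      omega
    · push_neg at hall
      obtain ⟨i0, hi0⟩ := hall
      have hz : ∑ t : Fq, (Polynomial.C t * Polynomial.X ^ (i0 : ℕ)) ^ e i0 = 0 := by
        have hts : ∑ t : Fq, t ^ e i0 = 0 := by
          apply sum_pow_eq_zero'
          by_cases h0 : e i0 = 0
          · exact Or.inl h0
          · exact Or.inr (hi0 h0)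
        simp_rw [mul_pow, ← Polynomial.C_pow, ← Finset.sum_mul, ← map_sum, hts, map_zero,
          zero_mul]
      rw [Finset.prod_eq_zero (Finset.mem_univ i0) hz, mul_zero]


lemma phi_monic (d : ℕ) (c : Fin d → Fq) :
    (Polynomial.X ^ d + ∑ i : Fin d, Polynomial.C (c i) * Polynomial.X ^ (i : ℕ)).Monic := by
  apply Polynomial.monic_X_pow_add
  refine lt_of_le_of_lt (Polynomial.degree_sum_le _ _) ?_
  rw [Finset.sup_lt_iff (by exact_mod_cast WithBot.bot_lt_coe d)]
  intro i _
  refine lt_of_le_of_lt (Polynomial.degree_C_mul_X_pow_le _ _) ?_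
  exact_mod_cast i.isLt

lemma phi_natDegree (d : ℕ) (c : Fin d → Fq) :
    (Polynomial.X ^ d + ∑ i : Fin d, Polynomial.C (c i) * Polynomial.X ^ (i : ℕ)).natDegree
      = d := by
  apply Polynomial.natDegree_eq_of_degree_eq_some
  rw [Polynomial.degree_add_eq_left_of_degree_lt, Polynomial.degree_X_pow]
  rw [Polynomial.degree_X_pow]
  refine lt_of_le_of_lt (Polynomial.degree_sum_le _ _) ?_
  rw [Finset.sup_lt_iff (by exact_mod_cast WithBot.bot_lt_coe d)]
  intro i _
  refine lt_of_le_of_lt (Polynomial.degree_C_mul_X_pow_le _ _) ?_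
  exact_mod_cast i.isLt

lemma phi_coeff (d : ℕ) (c : Fin d → Fq) (i : Fin d) :
    (Polynomial.X ^ d + ∑ i : Fin d, Polynomial.C (c i) * Polynomial.X ^ (i : ℕ)).coeff i
      = c i := by
  rw [Polynomial.coeff_add, Polynomial.coeff_X_pow, if_neg (by omega : ¬ (i : ℕ) = d),
    Polynomial.finset_sum_coeff, zero_add]
  rw [Finset.sum_eq_single i]
  · rw [Polynomial.coeff_C_mul, Polynomial.coeff_X_pow, if_pos rfl, mul_one]
  · intro b _ hb
    rw [Polynomial.coeff_C_mul, Polynomial.coeff_X_pow,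
      if_neg (fun h => hb (Fin.ext h).symm), mul_zero]
  · intro h
    exact absurd (Finset.mem_univ i) h

lemma phi_surj (d : ℕ) (a : Polynomial Fq) (ha : a.Monic) (hd : a.natDegree = d) :
    Polynomial.X ^ d + ∑ i : Fin d, Polynomial.C (a.coeff i) * Polynomial.X ^ (i : ℕ) = a := by
  conv_rhs => rw [Polynomial.as_sum_range' a (d + 1) (by omega)]
  rw [Finset.sum_range_succ, ← hd, ha.coeff_natDegree, hd, ← Polynomial.X_pow_eq_monomial,
    add_comm]
  congr 1
  rw [Finset.sum_range fun i => Polynomial.monomial i (a.coeff i)]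
  exact Finset.sum_congr rfl fun i _ => Polynomial.C_mul_X_pow_eq_monomial

/-- The power sum `S_d(k) = Σ a^k`, where `a` ranges over all monic polynomials of
degree `d` in `A = F_q[θ]`. -/
noncomputable def powerSum (Fq : Type) [Field Fq] [Fintype Fq] (d k : ℕ) : Polynomial Fq :=
  ∑ᶠ a ∈ {a : Polynomial Fq | a.Monic ∧ a.natDegree = d}, a ^ k

/-- If `(q-1)·d` exceeds the sum of the base-`q` digits of `k`, then the power sum
`S_d(k) = Σ_{a monic, deg a = d} a^k` vanishes in `F_q[θ]`. -/
theorem powerSum_eq_zero_of_digitSum_lt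
    (p m₀ : ℕ) (hp : p.Prime) (hm₀ : 0 < m₀)
    (Fq : Type) [Field Fq] [Fintype Fq] (q : ℕ) (hq : q = p ^ m₀)
    (hcard : Fintype.card Fq = q)
    (k : ℕ) (hk : 0 < k) (d : ℕ)
    (hd : (Nat.digits q k).sum < (q - 1) * d) :
    powerSum Fq d k = 0 := by
  classical
  haveI : CharP Fq p := charP_of_card hp hm₀ (hcard.trans hq)
  have hinj : Function.Injective (fun c : Fin d → Fq =>
      Polynomial.X ^ d + ∑ i : Fin d, Polynomial.C (c i) * Polynomial.X ^ (i : ℕ)) := by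
    intro c c' hcc
    simp only [] at hcc
    funext i
    rw [← phi_coeff d c i, ← phi_coeff d c' i, hcc]
  have hset : {a : Polynomial Fq | a.Monic ∧ a.natDegree = d} = Set.range (fun c : Fin d → Fq =>
      Polynomial.X ^ d + ∑ i : Fin d, Polynomial.C (c i) * Polynomial.X ^ (i : ℕ)) := by
    ext a
    constructor
    · rintro ⟨ham, had⟩
      exact ⟨fun i => a.coeff i, phi_surj d a ham had⟩
    · rintro ⟨c, rfl⟩
      exact ⟨phi_monic d c, phi_natDegree d c⟩
  rw [powerSum, hset, finsum_mem_range hinj, finsum_eq_sum_of_fintype]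
  simp_rw [add_pow]
  rw [Finset.sum_comm]
  apply Finset.sum_eq_zero
  intro j hj
  rw [Finset.mem_range] at hj
  by_cases hc : p ∣ Nat.choose k j
  · have hmz : ((Nat.choose k j : ℕ) : Polynomial Fq) = 0 := by
      rw [← map_natCast (Polynomial.C : Fq →+* Polynomial Fq),
        (CharP.cast_eq_zero_iff Fq p _).2 hc, map_zero]
    apply Finset.sum_eq_zero
    intro c _
    rw [hmz, mul_zero]
  · have hjk : j + (k - j) = k := by omega
    have hadd := digits_sum_add_of_choose hp hm₀ hq j (k - j) (by rwa [hjk])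
    rw [hjk] at hadd
    have hle : (Nat.digits q (k - j)).sum < (q - 1) * d := by omega
    have hkey := key_vanish (Fq := Fq) hp hm₀ (hcard.trans hq) d (k - j)
      (by rw [hcard]; exact hle)
    calc ∑ c : Fin d → Fq, (Polynomial.X ^ d) ^ j *
          (∑ i : Fin d, Polynomial.C (c i) * Polynomial.X ^ (i : ℕ)) ^ (k - j)
            * (Nat.choose k j : Polynomial Fq)
        = (Polynomial.X ^ d) ^ j *
          (∑ c : Fin d → Fq,
            (∑ i : Fin d, Polynomial.C (c i) * Polynomial.X ^ (i : ℕ)) ^ (k - j))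
            * (Nat.choose k j : Polynomial Fq) := by
          rw [Finset.mul_sum, Finset.sum_mul]
      _ = 0 := by rw [hkey, mul_zero, zero_mul]
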